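/- Let E_1,…,E_c be n×n complex matrices with Σ_i E_i*E_i = I_n (Kraus operators of a quantum channel Φ(ρ) = Σ_i E_i ρ E_i*), and let k, p ≥ 1. Then there exists a hybrid (k:p) quantum error correcting code for Φ — i.e., there exist mutually orthogonal rank-k orthogonal projections P_1,…,P_p on ℂ^n and complex scalars λ_{ij}^{(r)} such that P_r E_i*E_j P_s = δ_{rs} λ_{ij}^{(r)} P_r for all 1 ≤ i,j ≤ c and 1 ≤ r,s ≤ p — if and only if the joint rank (k:p)-matricial range Λ_{(k:p)}(E_1*E_1, E_1*E_2, …, E_c*E_c) of the c²-tuple of all products (E_i*E_j)_{1≤i,j≤c} is non-empty. -/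

import Mathlib

open Matrix Kronecker

/-- The joint rank `(k:p)`-matricial range of a tuple `A` of square complex matrices
(rows/columns indexed by a finite type `I` of cardinality `n`, tuple indexed by `J`):
tuples `(D_j)` of `p × p` complex diagonal matrices such that there is an `n × (kp)`
matrix `V` with `V* V = I_{kp}` and `V* A_j V = D_j ⊗ I_k` for all `j`. -/
def matricialRange {I J : Type*} [Fintype I] (k p : ℕ)
    (A : J → Matrix I I ℂ) : Set (J → Matrix (Fin p) (Fin p) ℂ) :=
  {D | (∀ j, (D j).IsDiag) ∧
    ∃ V : Matrix I (Fin p × Fin k) ℂ, Vᴴ * V = 1 ∧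
      ∀ j, Vᴴ * A j * V = (D j) ⊗ₖ (1 : Matrix (Fin k) (Fin k) ℂ)}

/-- The joint rank-`k` numerical range `Λ_k(A) = Λ_{(k:1)}(A)`, with elements identified
with scalar tuples: `x ∈ Λ_k(A)` iff there is `V` with `V* V = I_k` and `V* A_j V = x_j I_k`. -/
def jointRankRange {I J : Type*} [Fintype I] (k : ℕ)
    (A : J → Matrix I I ℂ) : Set (J → ℂ) :=
  {x | ∃ V : Matrix I (Fin k) ℂ, Vᴴ * V = 1 ∧ ∀ j, Vᴴ * A j * V = x j • 1}

/-- The joint rank-`k` numerical range, projection form: `x ∈ Λ_k(A)` iff there is a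
rank-`k` orthogonal projection `P` with `P A_j P = x_j P` for all `j`. -/
def jointRankRangeP {n : ℕ} {J : Type*} (k : ℕ)
    (A : J → Matrix (Fin n) (Fin n) ℂ) : Set (J → ℂ) :=
  {x | ∃ P : Matrix (Fin n) (Fin n) ℂ, P.IsHermitian ∧ P * P = P ∧ P.rank = k ∧
    ∀ j, P * A j * P = x j • P}

/-- block extraction lemma -/
lemma blk {n k p : ℕ} (V : Matrix (Fin n) (Fin p × Fin k) ℂ)
    (M : Matrix (Fin n) (Fin n) ℂ) (r s : Fin p) (t u : Fin k) :
    ((Matrix.of fun i t' => V i (r, t'))ᴴ * M * (Matrix.of fun i u' => V i (s, u'))) t u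
      = (Vᴴ * M * V) (r, t) (s, u) := by
  simp [Matrix.mul_apply, Matrix.conjTranspose_apply, Finset.sum_mul, Finset.mul_sum]

lemma blk1 {n k p : ℕ} (V : Matrix (Fin n) (Fin p × Fin k) ℂ)
    (r s : Fin p) (t u : Fin k) :
    ((Matrix.of fun i t' => V i (r, t'))ᴴ * (Matrix.of fun i u' => V i (s, u'))) t u
      = (Vᴴ * V) (r, t) (s, u) := by
  simp [Matrix.mul_apply, Matrix.conjTranspose_apply]

/-- isometry from a rank-k hermitian projection -/
lemma exists_isometry {n k : ℕ} (P : Matrix (Fin n) (Fin n) ℂ)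
    (hP : P.IsHermitian) (hidem : P * P = P) (hrank : P.rank = k) :
    ∃ W : Matrix (Fin n) (Fin k) ℂ, Wᴴ * W = 1 ∧ W * Wᴴ = P := by
  set U : Matrix (Fin n) (Fin n) ℂ := (hP.eigenvectorUnitary : Matrix (Fin n) (Fin n) ℂ) with hUdef
  have hU1 : star U * U = 1 := hP.eigenvectorUnitary.prop.1
  have hU2 : U * star U = 1 := hP.eigenvectorUnitary.prop.2
  set d := hP.eigenvalues with hddef
  have hdiag : star U * P * U = diagonal (RCLike.ofReal ∘ d) :=
    by rw [hUdef, ← Unitary.conjStarAlgAut_star_apply (S := ℂ)]; exact hP.conjStarAlgAut_star_eigenvectorUnitary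
  have h2 : diagonal ((RCLike.ofReal ∘ d : Fin n → ℂ)) * diagonal ((RCLike.ofReal ∘ d : Fin n → ℂ))
      = diagonal ((RCLike.ofReal ∘ d : Fin n → ℂ)) := by
    rw [← hdiag]
    calc star U * P * U * (star U * P * U)
        = star U * (P * (U * star U) * P) * U := by simp only [Matrix.mul_assoc]
      _ = star U * P * U := by rw [hU2, Matrix.mul_one, hidem]
  have hsq : ∀ i, d i = 0 ∨ d i = 1 := by
    intro i
    have h3 := congrFun (congrFun h2 i) i
    simp [Matrix.mul_apply, Matrix.diagonal_apply, Finset.sum_ite_eq] at h3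
    have h4 : d i * d i = d i := by exact_mod_cast h3
    have h5 : d i * (d i - 1) = 0 := by ring_nf; nlinarith [h4]
    rcases mul_eq_zero.mp h5 with h | h
    · left; exact h
    · right; linarith
  have hcard : Fintype.card {i // d i ≠ 0} = k :=
    hP.rank_eq_card_non_zero_eigs.symm.trans hrank
  let e : Fin k ≃ {i // d i ≠ 0} := (Fintype.equivFinOfCardEq hcard).symm
  refine ⟨Matrix.of fun i t => U i (e t), ?_, ?_⟩
  · ext t u
    have h1 := congrFun (congrFun hU1 ((e t : Fin n))) ((e u : Fin n))
    simp only [Matrix.mul_apply, Matrix.star_apply, Matrix.one_apply] at h1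
    simp only [Matrix.mul_apply, Matrix.conjTranspose_apply, Matrix.of_apply,
      Matrix.one_apply]
    rw [h1]
    by_cases h : t = u
    · simp [h]
    · have : (e t : Fin n) ≠ (e u : Fin n) := by
        intro hc
        exact h (e.injective (Subtype.ext hc))
      simp [h, this]
  · ext i i'
    rw [hP.spectral_theorem, Unitary.conjStarAlgAut_apply]
    simp only [Matrix.mul_apply, Matrix.conjTranspose_apply, Matrix.of_apply,
      Matrix.star_apply, Matrix.diagonal_apply, Function.comp_apply, mul_ite, mul_zero,
      Finset.sum_ite_eq', Finset.mem_univ, if_true]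
    simp only [← hddef, ← hUdef]
    calc (∑ t : Fin k, U i ↑(e t) * star (U i' ↑(e t)))
        = ∑ j : {j // d j ≠ 0}, U i ↑j * star (U i' ↑j) :=
          Equiv.sum_comp e (fun j : {j // d j ≠ 0} => U i ↑j * star (U i' ↑j))
      _ = ∑ j ∈ Finset.univ.filter (fun j => d j ≠ 0), U i j * star (U i' j) :=
          (Finset.sum_subtype (Finset.univ.filter (fun j => d j ≠ 0)) (fun x => by simp) (fun j => U i j * star (U i' j))).symm
      _ = ∑ j, if d j ≠ 0 then U i j * star (U i' j) else 0 := Finset.sum_filter _ _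
      _ = ∑ j, U i j * (RCLike.ofReal (d j) : ℂ) * star (U i' j) := by
          refine Finset.sum_congr rfl fun j _ => ?_
          rcases hsq j with h | h <;> simp [h]

lemma blkM {n k p : ℕ} (V : Matrix (Fin n) (Fin p × Fin k) ℂ)
    (M : Matrix (Fin n) (Fin n) ℂ) (r s : Fin p) :
    (Matrix.of fun i t' => V i (r, t'))ᴴ * M * (Matrix.of fun i u' => V i (s, u'))
      = Matrix.of fun t u => (Vᴴ * M * V) (r, t) (s, u) := by
  ext t u; exact blk V M r s t u

lemma blk1M {n k p : ℕ} (V : Matrix (Fin n) (Fin p × Fin k) ℂ) (r s : Fin p) :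
    (Matrix.of fun i t' => V i (r, t'))ᴴ * (Matrix.of fun i u' => V i (s, u'))
      = Matrix.of fun t u => (Vᴴ * V) (r, t) (s, u) := by
  ext t u; exact blk1 V r s t u

open ComplexOrder in
lemma rank_WWH {n k : ℕ} (W : Matrix (Fin n) (Fin k) ℂ) (h : Wᴴ * W = 1) :
    (W * Wᴴ).rank = k := by
  rw [Matrix.rank_self_mul_conjTranspose, ← Matrix.rank_conjTranspose_mul_self, h,
    Matrix.rank_one, Fintype.card_fin]

/-- Lemma 3.3: A quantum channel with Kraus operators `E_1,…,E_c`
(so `Σ_i E_i* E_i = I`) has a hybrid `(k:p)` quantum error correcting code — mutually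
orthogonal rank-`k` orthogonal projections `P_1,…,P_p` and scalars `λ_{ij}^{(r)}` with
`P_r E_i* E_j P_s = δ_{rs} λ_{ij}^{(r)} P_r` — if and only if the joint rank
`(k:p)`-matricial range of the `c²`-tuple `(E_i* E_j)_{i,j}` is nonempty. -/
theorem stmt9 (n c k p : ℕ) (hk : 1 ≤ k) (hp : 1 ≤ p)
    (E : Fin c → Matrix (Fin n) (Fin n) ℂ)
    (hE : ∑ i, (E i)ᴴ * E i = 1) :
    (∃ P : Fin p → Matrix (Fin n) (Fin n) ℂ,
        (∀ r, (P r).IsHermitian) ∧ (∀ r, P r * P r = P r) ∧ (∀ r, (P r).rank = k) ∧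
        (∀ r s, r ≠ s → P r * P s = 0) ∧
        ∃ lam : Fin c → Fin c → Fin p → ℂ,
          ∀ i j r s, P r * ((E i)ᴴ * E j) * P s =
            if r = s then lam i j r • P r else 0) ↔
      (matricialRange k p (fun ij : Fin c × Fin c => (E ij.1)ᴴ * E ij.2)).Nonempty := by
  constructor
  · rintro ⟨P, hherm, hidem, hrank, horth, lam, hlam⟩
    choose W hW1 hW2 using fun r => exists_isometry (P r) (hherm r) (hidem r) (hrank r)
    set Vc : Matrix (Fin n) (Fin p × Fin k) ℂ :=
      Matrix.of (fun i rt => W rt.1 i rt.2) with hVc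
    have hWc : ∀ r : Fin p, (Matrix.of fun i t' => Vc i (r, t')) = W r := fun r => rfl
    have horthW : ∀ r s : Fin p, r ≠ s → (W r)ᴴ * W s = 0 := by
      intro r s h
      calc (W r)ᴴ * W s
          = ((W r)ᴴ * W r) * ((W r)ᴴ * W s) * ((W s)ᴴ * W s) := by
            rw [hW1 r, hW1 s, Matrix.one_mul, Matrix.mul_one]
        _ = (W r)ᴴ * (P r * P s) * W s := by
            rw [← hW2 r, ← hW2 s]; simp only [Matrix.mul_assoc]
        _ = 0 := by rw [horth r s h, Matrix.mul_zero, Matrix.zero_mul]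
    have hAW : ∀ i j (r s : Fin p), (W r)ᴴ * ((E i)ᴴ * E j) * W s
        = if r = s then lam i j r • (1 : Matrix (Fin k) (Fin k) ℂ) else 0 := by
      intro i j r s
      have key : (W r)ᴴ * ((E i)ᴴ * E j) * W s
          = (W r)ᴴ * (P r * ((E i)ᴴ * E j) * P s) * W s := by
        calc (W r)ᴴ * ((E i)ᴴ * E j) * W s
            = ((W r)ᴴ * W r) * ((W r)ᴴ * ((E i)ᴴ * E j) * W s) * ((W s)ᴴ * W s) := by
              rw [hW1 r, hW1 s, Matrix.one_mul, Matrix.mul_one]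
          _ = (W r)ᴴ * (P r * ((E i)ᴴ * E j) * P s) * W s := by
              rw [← hW2 r, ← hW2 s]; simp only [Matrix.mul_assoc]
      rw [key, hlam i j r s]
      by_cases hrs : r = s
      · subst hrs
        rw [if_pos rfl, if_pos rfl, ← hW2 r, Matrix.mul_smul, Matrix.smul_mul]
        congr 1
        calc (W r)ᴴ * (W r * (W r)ᴴ) * W r
            = ((W r)ᴴ * W r) * ((W r)ᴴ * W r) := by simp only [Matrix.mul_assoc]
          _ = 1 := by rw [hW1 r, Matrix.one_mul]
      · rw [if_neg hrs, if_neg hrs, Matrix.mul_zero, Matrix.zero_mul]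
    refine ⟨fun ij => Matrix.diagonal (fun r => lam ij.1 ij.2 r),
      fun ij => Matrix.isDiag_diagonal _, Vc, ?_, ?_⟩
    · ext ⟨r, t⟩ ⟨s, u⟩
      rw [← blk1 Vc r s t u, hWc r, hWc s]
      by_cases hrs : r = s
      · subst hrs
        rw [hW1 r]
        simp [Matrix.one_apply, Prod.ext_iff]
      · rw [horthW r s hrs]
        simp [Matrix.one_apply, Prod.ext_iff, hrs]
    · intro ij
      ext ⟨r, t⟩ ⟨s, u⟩
      rw [← blk Vc ((E ij.1)ᴴ * E ij.2) r s t u, hWc r, hWc s, hAW ij.1 ij.2 r s]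
      by_cases hrs : r = s
      · subst hrs
        simp [Matrix.kroneckerMap_apply, Matrix.one_apply, Matrix.diagonal_apply]
      · simp [Matrix.kroneckerMap_apply, Matrix.one_apply, Matrix.diagonal_apply, hrs]
  · rintro ⟨D, hDdiag, V, hV1, hV2⟩
    set W : Fin p → Matrix (Fin n) (Fin k) ℂ :=
      fun r => Matrix.of fun i t => V i (r, t) with hWdef
    have hb1 : ∀ r s : Fin p, (W r)ᴴ * W s
        = if r = s then (1 : Matrix (Fin k) (Fin k) ℂ) else 0 := by
      intro r s
      have h := blk1M V r s
      rw [hV1] at h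
      rw [show (W r)ᴴ * W s = Matrix.of fun t u => (1 : Matrix (Fin p × Fin k) (Fin p × Fin k) ℂ) (r, t) (s, u) from h]
      ext t u
      by_cases hrs : r = s <;>
        simp [Matrix.one_apply, Prod.ext_iff, hrs]
    have hWr1 : ∀ r, (W r)ᴴ * W r = 1 := fun r => by simpa using hb1 r r
    have hbA : ∀ i j (r s : Fin p), (W r)ᴴ * ((E i)ᴴ * E j) * W s
        = if r = s then D (i, j) r r • (1 : Matrix (Fin k) (Fin k) ℂ) else 0 := by
      intro i j r s
      have h := blkM V ((E i)ᴴ * E j) r s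
      rw [hV2 (i, j)] at h
      rw [show (W r)ᴴ * ((E i)ᴴ * E j) * W s
        = Matrix.of fun t u => ((D (i, j)) ⊗ₖ (1 : Matrix (Fin k) (Fin k) ℂ)) ((r, t)) ((s, u)) from h]
      ext t u
      by_cases hrs : r = s
      · subst hrs
        simp [Matrix.kroneckerMap_apply, Matrix.one_apply]
      · have h0 : D (i, j) r s = 0 := hDdiag (i, j) hrs
        simp [Matrix.kroneckerMap_apply, hrs, h0]
    refine ⟨fun r => W r * (W r)ᴴ, ?_, ?_, ?_, ?_, fun i j r => D (i, j) r r, ?_⟩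
    · intro r
      show (W r * (W r)ᴴ)ᴴ = W r * (W r)ᴴ
      rw [Matrix.conjTranspose_mul, Matrix.conjTranspose_conjTranspose]
    · intro r
      calc W r * (W r)ᴴ * (W r * (W r)ᴴ)
          = W r * ((W r)ᴴ * W r) * (W r)ᴴ := by simp only [Matrix.mul_assoc]
        _ = W r * (W r)ᴴ := by rw [hWr1 r, Matrix.mul_one]
    · intro r
      exact rank_WWH (W r) (hWr1 r)
    · intro r s hrs
      calc W r * (W r)ᴴ * (W s * (W s)ᴴ)
          = W r * ((W r)ᴴ * W s) * (W s)ᴴ := by simp only [Matrix.mul_assoc]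
        _ = 0 := by rw [hb1 r s, if_neg hrs, Matrix.mul_zero, Matrix.zero_mul]
    · intro i j r s
      have key : W r * (W r)ᴴ * ((E i)ᴴ * E j) * (W s * (W s)ᴴ)
          = W r * ((W r)ᴴ * ((E i)ᴴ * E j) * W s) * (W s)ᴴ := by
        simp only [Matrix.mul_assoc]
      rw [key, hbA i j r s]
      by_cases hrs : r = s
      · subst hrs
        rw [if_pos rfl, if_pos rfl, Matrix.mul_smul, Matrix.mul_one, Matrix.smul_mul]
      · rw [if_neg hrs, if_neg hrs, Matrix.mul_zero, Matrix.zero_mul]
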